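/- Let b, n be positive integers and let u = (u_1, …, u_n) be a weakly increasing sequence of nonnegative integers with u_i ≤ b(i−1) for all i. Then the sequence ζ(u), built by starting from the empty sequence and, for i = 1, …, n in order, inserting a contiguous block of b copies of i so that exactly u_i of the already-present entries lie to its left, is a b-Stirling permutation of size n. -/

import Mathlib

/-- `zeta b u N` : starting from the empty sequence, for `i = 1, …, N` in order,
insert a contiguous block of `b` copies of `i` so that exactly `u i` of the
already-present entries lie to its left. -/
def zeta (b : ℕ) (u : ℕ → ℕ) : ℕ → List ℕ
  | 0 => []
  | n + 1 =>
      (zeta b u n).take (u (n + 1)) ++ List.replicate b (n + 1) ++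
        (zeta b u n).drop (u (n + 1))

/-- `π` is a `b`-Stirling permutation of size `N`: a sequence of length `b*N`
over `{1,…,N}` in which every value appears exactly `b` times, and whenever a
value occurs between two occurrences of a value `i`, it is `≥ i`. -/
def IsStirling (b N : ℕ) (π : List ℕ) : Prop :=
  π.length = b * N ∧
  (∀ v, 1 ≤ v → v ≤ N → π.count v = b) ∧
  (∀ v, v ∈ π → 1 ≤ v ∧ v ≤ N) ∧
  ∀ p q r : Fin π.length, p < q → q < r → π.get p = π.get r → π.get p ≤ π.get q

/-- The index-based "between" condition is equivalent to a sublist condition. -/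
lemma stirling_cond_iff (π : List ℕ) :
    (∀ p q r : Fin π.length, p < q → q < r → π.get p = π.get r → π.get p ≤ π.get q) ↔
      (∀ a c : ℕ, [a, c, a].Sublist π → a ≤ c) := by
  constructor
  · intro h a c hs
    rw [List.sublist_iff_exists_fin_orderEmbedding_get_eq] at hs
    obtain ⟨f, hf⟩ := hs
    have hlen : ([a, c, a] : List ℕ).length = 3 := rfl
    have h0 := hf ⟨0, by simp⟩
    have h1 := hf ⟨1, by simp⟩
    have h2 := hf ⟨2, by simp⟩
    simp only [List.get] at h0 h1 h2
    have hm01 : f ⟨0, by simp⟩ < f ⟨1, by simp⟩ := f.strictMono (by simp [Fin.lt_def])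
    have hm12 : f ⟨1, by simp⟩ < f ⟨2, by simp⟩ := f.strictMono (by simp [Fin.lt_def])
    have := h _ _ _ hm01 hm12 (by rw [← h0, ← h2])
    rw [← h0, ← h1] at this
    exact this
  · intro h p q r hpq hqr he
    have hg : StrictMono (![p, q, r] : Fin 3 → Fin π.length) := by
      intro i j hij
      fin_cases i <;> fin_cases j <;>
        first
          | exact absurd hij (by decide)
          | simpa using hpq
          | simpa using hqr
          | simpa using hpq.trans hqr
    have hemb : ∃ f : Fin ([π.get p, π.get q, π.get r] : List ℕ).length ↪o Fin π.length,
        ∀ ix, ([π.get p, π.get q, π.get r] : List ℕ).get ix = π.get (f ix) := by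
      refine ⟨OrderEmbedding.ofStrictMono (![p, q, r] : Fin 3 → Fin π.length) hg, ?_⟩
      intro ix
      fin_cases ix <;> rfl
    have hs : ([π.get p, π.get q, π.get r] : List ℕ).Sublist π :=
      List.sublist_iff_exists_fin_orderEmbedding_get_eq.2 hemb
    rw [← he] at hs
    exact h _ _ hs

/-- Inserting a block of copies of `N+1` anywhere preserves the sublist condition. -/
lemma step_cond {π : List ℕ} {N b k : ℕ}
    (hmem : ∀ v ∈ π, v ≤ N)
    (hP : ∀ a c : ℕ, [a, c, a].Sublist π → a ≤ c) :
    ∀ a c : ℕ, [a, c, a].Sublist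
      (π.take k ++ List.replicate b (N + 1) ++ π.drop k) → a ≤ c := by
  intro a c hs
  rw [List.append_assoc, List.sublist_append_iff] at hs
  obtain ⟨x, yz, hxyz, hx, hyz⟩ := hs
  rw [List.sublist_append_iff] at hyz
  obtain ⟨y, z, hyz', hy, hz⟩ := hyz
  subst hyz'
  have hxπ : ∀ v ∈ x, v ≤ N := fun v hv =>
    hmem v (List.mem_of_mem_take (hx.subset hv))
  have hzπ : ∀ v ∈ z, v ≤ N := fun v hv =>
    hmem v ((π.drop_sublist k).subset (hz.subset hv))
  have hyrep : ∀ v ∈ y, v = N + 1 := fun v hv =>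
    List.eq_of_mem_replicate (hy.subset hv)
  by_cases ha : a = N + 1
  · -- both `a`s must come from the replicate block, hence so does `c`.
    have hxnil : x = [] := by
      cases x with
      | nil => rfl
      | cons w ws =>
        exfalso
        have hw : w = a := by
          have := congrArg List.head? hxyz
          simpa using this.symm
        have : w ≤ N := hxπ w List.mem_cons_self
        omega
    have hznil : z = [] := by
      rcases List.eq_nil_or_concat z with h | ⟨zs, w, rfl⟩
      · exact h
      · exfalso
        have hw : w = a := by
          have h1 : ([a, c, a] : List ℕ).getLast? = some w := by
            rw [hxyz]; simp
          simpa using h1.symm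
        have : w ≤ N := hzπ w (by simp)
        omega
    subst hxnil hznil
    simp only [List.nil_append, List.append_nil] at hxyz
    subst hxyz
    have : c = N + 1 := hyrep c (by simp)
    omega
  · by_cases hc : c = N + 1
    · -- a appears in the list, a ≠ N+1, so a ∈ π, so a ≤ N < c.
      have haxyz : a ∈ x ++ (y ++ z) := by rw [← hxyz]; simp
      rcases List.mem_append.1 haxyz with h | h
      · have := hxπ a h; omega
      · rcases List.mem_append.1 h with h | h
        · exact absurd (hyrep a h) ha
        · have := hzπ a h; omega
    · -- y contains neither a nor c, so y = [] and [a,c,a] <+ π.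
      have hynil : y = [] := by
        cases y with
        | nil => rfl
        | cons w ws =>
          exfalso
          have hw : w = N + 1 := hyrep w List.mem_cons_self
          have hmem2 : w ∈ x ++ (w :: ws ++ z) := by simp
          rw [← hxyz] at hmem2
          simp only [List.mem_cons, List.not_mem_nil, or_false] at hmem2
          rcases hmem2 with h | h | h <;> omega
      subst hynil
      simp only [List.nil_append] at hxyz
      have : ([a, c, a] : List ℕ).Sublist (π.take k ++ π.drop k) := by
        rw [hxyz]; exact hx.append hz
      rw [List.take_append_drop] at this
      exact hP a c this

lemma step_isStirling {π : List ℕ} {N b k : ℕ} (hb : 0 < b)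
    (hS : IsStirling b N π) :
    IsStirling b (N + 1) (π.take k ++ List.replicate b (N + 1) ++ π.drop k) := by
  obtain ⟨hlen, hcount, hmem, hord⟩ := hS
  have hmem' : ∀ v ∈ π, v ≤ N := fun v hv => (hmem v hv).2
  refine ⟨?_, ?_, ?_, ?_⟩
  · simp only [List.length_append, List.length_replicate]
    have : (π.take k).length + (π.drop k).length = π.length := by
      rw [← List.length_append, List.take_append_drop]
    rw [Nat.mul_succ]; omega
  · intro v hv1 hv2
    have hsplit : (π.take k).count v + (π.drop k).count v = π.count v := by
      rw [← List.count_append, List.take_append_drop]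
    have key : (π.take k ++ List.replicate b (N + 1) ++ π.drop k).count v
        = (π.take k).count v + (List.replicate b (N + 1)).count v + (π.drop k).count v := by
      rw [List.count_append, List.count_append]
    rw [key]
    have hrep : (List.replicate b (N + 1)).count v = if N + 1 = v then b else 0 := by
      simp [List.count_replicate]
    by_cases h : v = N + 1
    · have h0 : π.count v = 0 := by
        rw [List.count_eq_zero]
        intro hmemv
        have := hmem' v hmemv
        omega
      rw [hrep, if_pos h.symm]
      omega
    · rw [hrep, if_neg (fun hh => h hh.symm)]
      have := hcount v hv1 (by omega)
      omega
  · intro v hv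
    simp only [List.mem_append, List.mem_replicate] at hv
    rcases hv with (h | h) | h
    · have := hmem v (List.mem_of_mem_take h); omega
    · omega
    · have := hmem v ((π.drop_sublist k).subset h); omega
  · rw [stirling_cond_iff]
    exact step_cond hmem' ((stirling_cond_iff π).1 hord)

/-- if `u` is weakly increasing with `u i ≤ b*(i-1)`, then `ζ(u)`
is a `b`-Stirling permutation of size `n`. -/
theorem zeta_isStirling (b n : ℕ) (hb : 0 < b) (hn : 0 < n) (u : ℕ → ℕ)
    (hmono : ∀ i, 1 ≤ i → i < n → u i ≤ u (i + 1))
    (hbound : ∀ i, 1 ≤ i → i ≤ n → u i ≤ b * (i - 1)) :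
    IsStirling b n (zeta b u n) := by
  clear hn hmono hbound
  induction n with
  | zero =>
      refine ⟨by simp [zeta], ?_, ?_, ?_⟩
      · intro v h1 h2; omega
      · intro v hv; simp [zeta] at hv
      · intro p q r _ _ _
        exact absurd p.is_lt (by simp [zeta])
  | succ n ih =>
      exact step_isStirling hb ih
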